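/- Let ρ > 0 and let n ↦ L_n be a ρ-admissible scaling. For each n ≥ 2 let (D_n, S_n) be a compound-binomial degree pair with parameters (n, L_n). If 1 + ρ·ln(Γ(1)^{μ(1)} Γ(0)^{μ(0)}) < 0, then D_n converges in distribution to 0 (i.e. P(D_n = 0) → 1); if 1 + ρ·ln(Γ(1)^{μ(1)} Γ(0)^{μ(0)}) > 0, then D_n converges in distribution to ∞ in the sense that lim_{n→∞} P(D_n = d) = 0 for every fixed d = 0, 1, 2, …. -/

import Mathlib

open MeasureTheory ProbabilityTheory Filter Real
open scoped ENNReal NNReal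

noncomputable section

/-- A compound-binomial degree pair `(D, S)` with parameters `(n, L)`:
`S` is Binomial(L, μ1) and, conditionally on `S = ℓ`, `D` is
Binomial(n-1, Γ1^ℓ Γ0^(L-ℓ)); equivalently the joint pmf is as below. -/
def IsCompoundBinomialPair {Ω : Type*} [MeasurableSpace Ω] (P : Measure Ω)
    (μ1 μ0 Γ1 Γ0 : ℝ) (n L : ℕ) (D S : Ω → ℕ) : Prop :=
  Measurable D ∧ Measurable S ∧
    ∀ d ≤ n - 1, ∀ ℓ ≤ L,
      P {ω | D ω = d ∧ S ω = ℓ} =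
        ENNReal.ofReal ((L.choose ℓ : ℝ) * μ1 ^ ℓ * μ0 ^ (L - ℓ) *
          ((n - 1).choose d : ℝ) * (Γ1 ^ ℓ * Γ0 ^ (L - ℓ)) ^ d *
          (1 - Γ1 ^ ℓ * Γ0 ^ (L - ℓ)) ^ (n - 1 - d))

/-- A scaling `n ↦ L n` is `ρ`-admissible if `L n ~ ρ ln n` as `n → ∞`. -/
def IsAdmissible (ρ : ℝ) (L : ℕ → ℕ) : Prop :=
  (∀ n, 0 < L n) ∧
    Tendsto (fun n => (L n : ℝ) / (ρ * Real.log n)) atTop (nhds 1)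

/-- `Ψ(x) = (x+1) ln(x+1) - x`. -/
def Psi (x : ℝ) : ℝ := (x + 1) * Real.log (x + 1) - x

/-- The standard Gaussian distribution function. -/
def Phi (z : ℝ) : ℝ := ∫ t in Set.Iic z, Real.exp (-t ^ 2 / 2) / Real.sqrt (2 * Real.pi)

/-! ### Auxiliary lemmas -/

lemma binom_sum (x y : ℝ) (L : ℕ) :
    ∑ ℓ ∈ Finset.range (L + 1), (L.choose ℓ : ℝ) * x ^ ℓ * y ^ (L - ℓ) = (x + y) ^ L := by
  rw [add_pow]
  exact Finset.sum_congr rfl fun ℓ _ => by ring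

lemma term_le_one {m d : ℕ} (hd : d ≤ m) {q : ℝ} (h0 : 0 ≤ q) (h1 : q ≤ 1) :
    (m.choose d : ℝ) * q ^ d * (1 - q) ^ (m - d) ≤ 1 := by
  have hnn : ∀ k ∈ Finset.range (m + 1), 0 ≤ (m.choose k : ℝ) * q ^ k * (1 - q) ^ (m - k) :=
    fun k _ => by
      have : (0:ℝ) ≤ 1 - q := by linarith
      positivity
  have hle := Finset.single_le_sum hnn (Finset.mem_range.mpr (Nat.lt_succ_of_le hd))
  calc (m.choose d : ℝ) * q ^ d * (1 - q) ^ (m - d)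
      ≤ ∑ k ∈ Finset.range (m + 1), (m.choose k : ℝ) * q ^ k * (1 - q) ^ (m - k) := hle
    _ = 1 := by rw [binom_sum]; norm_num

lemma min1_le_rpow {x s : ℝ} (hx : 0 ≤ x) (hs : 0 < s) (hs1 : s ≤ 1) :
    min 1 x ≤ x ^ s := by
  rcases le_or_gt 1 x with h | h
  · calc min 1 x ≤ 1 := min_le_left _ _
      _ ≤ x ^ s := Real.one_le_rpow h hs.le
  · rcases eq_or_lt_of_le hx with h0 | h0
    · simp [← h0, Real.zero_rpow hs.ne']
    · calc min 1 x ≤ x := min_le_right _ _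
        _ = x ^ (1:ℝ) := (Real.rpow_one x).symm
        _ ≤ x ^ s := Real.rpow_le_rpow_of_exponent_ge h0 h.le hs1

lemma q_pow_rpow {a b : ℝ} (ha : 0 < a) (hb : 0 < b) (s : ℝ) (L ℓ : ℕ) :
    (a ^ ℓ * b ^ (L - ℓ)) ^ s = (a ^ s) ^ ℓ * (b ^ s) ^ (L - ℓ) := by
  rw [Real.mul_rpow (by positivity) (by positivity),
    ← Real.rpow_natCast a ℓ, ← Real.rpow_natCast b (L - ℓ),
    ← Real.rpow_mul ha.le, ← Real.rpow_mul hb.le,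
    ← Real.rpow_natCast (a ^ s) ℓ, ← Real.rpow_natCast (b ^ s) (L - ℓ),
    ← Real.rpow_mul ha.le, ← Real.rpow_mul hb.le, mul_comm (ℓ : ℝ) s,
    mul_comm ((L - ℓ : ℕ) : ℝ) s]

lemma deriv_neg_ex {h : ℝ → ℝ} {c : ℝ} (hd : HasDerivAt h c 0) (h0 : h 0 = 0) (hc : c < 0) :
    ∃ s : ℝ, 0 < s ∧ s ≤ 1 ∧ h s < 0 := by
  have h1 : Tendsto (slope h 0) (nhdsWithin 0 {(0:ℝ)}ᶜ) (nhds c) :=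
    hasDerivAt_iff_tendsto_slope.mp hd
  have h2 : Tendsto (slope h 0) (nhdsWithin 0 (Set.Ioi (0:ℝ))) (nhds c) :=
    h1.mono_left (nhdsWithin_mono 0 fun x hx => ne_of_gt hx)
  have h3 : ∀ᶠ s in nhdsWithin (0:ℝ) (Set.Ioi 0), slope h 0 s < 0 :=
    h2.eventually_lt_const hc
  have h4 : ∀ᶠ s in nhdsWithin (0:ℝ) (Set.Ioi 0), s ∈ Set.Ioi (0:ℝ) :=
    eventually_mem_nhdsWithin
  have h5 : ∀ᶠ s in nhdsWithin (0:ℝ) (Set.Ioi 0), s < 1 :=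
    eventually_nhdsWithin_of_eventually_nhds (eventually_lt_nhds one_pos)
  obtain ⟨s, hs0, hs1, hsl⟩ := (h4.and (h5.and h3)).exists
  refine ⟨s, hs0, hs1.le, ?_⟩
  rw [slope_def_field, h0, sub_zero, sub_zero] at hsl
  rcases div_neg_iff.mp hsl with ⟨_, hb⟩ | ⟨ha, _⟩
  · exact absurd hs0 (by simpa using not_lt.mpr hb.le)
  · exact ha

lemma key_lim (ρ : ℝ) (hρ : 0 < ρ) (L : ℕ → ℕ)
    (hL : Tendsto (fun n => (L n : ℝ) / (ρ * Real.log n)) atTop (nhds 1))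
    (a g : ℝ) (hg : 0 < g) (h : a + ρ * Real.log g < 0) :
    Tendsto (fun n : ℕ => (n : ℝ) ^ a * g ^ (L n)) atTop (nhds 0) := by
  have hmain : Tendsto
      (fun n : ℕ => Real.log n * (a + ((L n : ℝ) / (ρ * Real.log n)) * (ρ * Real.log g)))
      atTop atBot := by
    refine Tendsto.atTop_mul_neg (C := a + 1 * (ρ * Real.log g)) (by linarith)
      (Real.tendsto_log_atTop.comp tendsto_natCast_atTop_atTop) ?_
    exact tendsto_const_nhds.add (hL.mul tendsto_const_nhds)
  have hexp : Tendsto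
      (fun n : ℕ => Real.exp (Real.log n * (a + ((L n : ℝ) / (ρ * Real.log n)) * (ρ * Real.log g))))
      atTop (nhds 0) := Real.tendsto_exp_atBot.comp hmain
  refine hexp.congr' ?_
  filter_upwards [eventually_ge_atTop 2] with n hn
  have hn0 : (0:ℝ) < n := by positivity
  have hlog : 0 < Real.log n := Real.log_pos (by exact_mod_cast hn)
  have e1 : (n : ℝ) ^ a = Real.exp (Real.log n * a) := Real.rpow_def_of_pos hn0 a
  have e2 : g ^ (L n) = Real.exp ((L n : ℝ) * Real.log g) := by
    rw [Real.exp_nat_mul, Real.exp_log hg]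
  have e3 : Real.log n * (a + ((L n : ℝ) / (ρ * Real.log n)) * (ρ * Real.log g))
      = Real.log n * a + (L n : ℝ) * Real.log g := by
    field_simp
  rw [e3, Real.exp_add, ← e1, ← e2]

lemma psi_anti (d : ℕ) {x y : ℝ} (hx : 2 * d ≤ x) (hxy : x ≤ y) :
    y ^ d * Real.exp (-y / 2) ≤ x ^ d * Real.exp (-x / 2) := by
  rcases Nat.eq_zero_or_pos d with hd | hd
  · subst hd
    simp only [pow_zero, one_mul]
    exact Real.exp_le_exp.mpr (by linarith)
  · have hx0 : (0:ℝ) < x := by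
      have : (2:ℝ) * d ≥ 2 := by
        have : (1:ℝ) ≤ d := by exact_mod_cast hd
        linarith
      linarith
    have hy0 : (0:ℝ) < y := lt_of_lt_of_le hx0 hxy
    have key : y ^ d ≤ x ^ d * Real.exp ((y - x) / 2) := by
      have h1 : y / x ≤ Real.exp ((y - x) / x) := by
        have := Real.add_one_le_exp ((y - x) / x)
        have : (y - x) / x + 1 ≤ Real.exp ((y - x) / x) := this
        calc y / x = (y - x) / x + 1 := by field_simp; ring
          _ ≤ _ := this
      have h2 : (y / x) ^ d ≤ Real.exp ((y - x) / x) ^ d :=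
        pow_le_pow_left₀ (by positivity) h1 d
      have h3 : Real.exp ((y - x) / x) ^ d = Real.exp ((d : ℝ) * ((y - x) / x)) := by
        rw [Real.exp_nat_mul]
      have h4 : (d : ℝ) * ((y - x) / x) ≤ (y - x) / 2 := by
        have hyx : (0:ℝ) ≤ y - x := by linarith
        have hdx : (d : ℝ) / x ≤ 1 / 2 := by
          rw [div_le_div_iff₀ hx0 two_pos]; linarith
        calc (d : ℝ) * ((y - x) / x) = (y - x) * ((d : ℝ) / x) := by ring
          _ ≤ (y - x) * (1 / 2) := mul_le_mul_of_nonneg_left hdx hyx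
          _ = (y - x) / 2 := by ring
      have h5 : (y / x) ^ d ≤ Real.exp ((y - x) / 2) := by
        calc (y / x) ^ d ≤ Real.exp ((d : ℝ) * ((y - x) / x)) := h3 ▸ h2
          _ ≤ Real.exp ((y - x) / 2) := Real.exp_le_exp.mpr h4
      calc y ^ d = x ^ d * (y / x) ^ d := by
            rw [← mul_pow]; congr 1; field_simp
        _ ≤ x ^ d * Real.exp ((y - x) / 2) := by
            exact mul_le_mul_of_nonneg_left h5 (by positivity)
    calc y ^ d * Real.exp (-y / 2)
        ≤ (x ^ d * Real.exp ((y - x) / 2)) * Real.exp (-y / 2) :=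
          mul_le_mul_of_nonneg_right key (Real.exp_pos _).le
      _ = x ^ d * Real.exp (-x / 2) := by
          rw [mul_assoc, ← Real.exp_add]; congr 2; ring

lemma binom_term_le_psi {m d : ℕ} (hm : 2 * d ≤ m) {q : ℝ} (h0 : 0 ≤ q) (h1 : q ≤ 1) :
    (m.choose d : ℝ) * q ^ d * (1 - q) ^ (m - d)
      ≤ ((m : ℝ) * q) ^ d * Real.exp (-((m : ℝ) * q) / 2) := by
  have hdm : d ≤ m := le_trans (by omega) hm
  have hC : (m.choose d : ℝ) ≤ (m : ℝ) ^ d := by exact_mod_cast Nat.choose_le_pow m d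
  have h1q : (0:ℝ) ≤ 1 - q := by linarith
  have hbound : (1 - q) ^ (m - d) ≤ Real.exp (-((m : ℝ) * q) / 2) := by
    have e1 : 1 - q ≤ Real.exp (-q) := by
      have := Real.add_one_le_exp (-q); linarith
    have e2 : (1 - q) ^ (m - d) ≤ Real.exp (-q) ^ (m - d) :=
      pow_le_pow_left₀ h1q e1 _
    have e3 : Real.exp (-q) ^ (m - d) = Real.exp (((m - d : ℕ) : ℝ) * (-q)) := by
      rw [Real.exp_nat_mul]
    have e4 : ((m - d : ℕ) : ℝ) * (-q) ≤ -((m : ℝ) * q) / 2 := by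
      have hc : ((m - d : ℕ) : ℝ) = (m : ℝ) - d := by
        rw [Nat.cast_sub hdm]
      rw [hc]
      have hmd : (m : ℝ) / 2 ≤ (m : ℝ) - d := by
        have : (2:ℝ) * d ≤ m := by exact_mod_cast hm
        linarith
      nlinarith
    calc (1 - q) ^ (m - d) ≤ Real.exp (((m - d : ℕ) : ℝ) * (-q)) := e3 ▸ e2
      _ ≤ Real.exp (-((m : ℝ) * q) / 2) := Real.exp_le_exp.mpr e4
  calc (m.choose d : ℝ) * q ^ d * (1 - q) ^ (m - d)
      ≤ (m : ℝ) ^ d * q ^ d * Real.exp (-((m : ℝ) * q) / 2) := by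
        apply mul_le_mul _ hbound (by positivity) (by positivity)
        exact mul_le_mul_of_nonneg_right hC (by positivity)
    _ = ((m : ℝ) * q) ^ d * Real.exp (-((m : ℝ) * q) / 2) := by rw [mul_pow]

lemma pmf_eval {Ω : Type*} [MeasurableSpace Ω] (P : Measure Ω) [IsProbabilityMeasure P]
    {μ1 μ0 Γ1 Γ0 : ℝ} (hμ1 : 0 < μ1) (hμ0 : 0 < μ0) (hμ : μ0 + μ1 = 1)
    (hΓ1 : Γ1 ∈ Set.Ioo (0:ℝ) 1) (hΓ0 : Γ0 ∈ Set.Ioo (0:ℝ) 1)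
    {n : ℕ} (Lp : ℕ) {D S : Ω → ℕ}
    (h : IsCompoundBinomialPair P μ1 μ0 Γ1 Γ0 n Lp D S) {d : ℕ} (hd : d ≤ n - 1) :
    P {ω | D ω = d} = ENNReal.ofReal (∑ ℓ ∈ Finset.range (Lp + 1),
      ((Lp.choose ℓ : ℝ) * μ1 ^ ℓ * μ0 ^ (Lp - ℓ) *
        ((n - 1).choose d : ℝ) * (Γ1 ^ ℓ * Γ0 ^ (Lp - ℓ)) ^ d *
        (1 - Γ1 ^ ℓ * Γ0 ^ (Lp - ℓ)) ^ (n - 1 - d))) := by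
  obtain ⟨hD, hS, hpmf⟩ := h
  set m := n - 1 with hm
  set pm : ℕ → ℕ → ℝ := fun e ℓ =>
    (Lp.choose ℓ : ℝ) * μ1 ^ ℓ * μ0 ^ (Lp - ℓ) * (m.choose e : ℝ) *
      (Γ1 ^ ℓ * Γ0 ^ (Lp - ℓ)) ^ e * (1 - Γ1 ^ ℓ * Γ0 ^ (Lp - ℓ)) ^ (m - e) with hpm
  have hq1 : ∀ ℓ : ℕ, Γ1 ^ ℓ * Γ0 ^ (Lp - ℓ) ≤ 1 := fun ℓ =>
    mul_le_one₀ (pow_le_one₀ hΓ1.1.le hΓ1.2.le) (pow_nonneg hΓ0.1.le _)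
      (pow_le_one₀ hΓ0.1.le hΓ0.2.le)
  have hnn : ∀ e ℓ, 0 ≤ pm e ℓ := fun e ℓ => by
    have h1 : (0:ℝ) ≤ 1 - Γ1 ^ ℓ * Γ0 ^ (Lp - ℓ) := by linarith [hq1 ℓ]
    have h2 : (0:ℝ) < Γ1 := hΓ1.1
    have h3 : (0:ℝ) < Γ0 := hΓ0.1
    simp only [hpm]
    refine mul_nonneg ?_ (pow_nonneg h1 _)
    positivity
  have hA : ∀ p : ℕ × ℕ, MeasurableSet {ω | D ω = p.1 ∧ S ω = p.2} := fun p => by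
    have he : {ω | D ω = p.1 ∧ S ω = p.2} = D ⁻¹' {p.1} ∩ S ⁻¹' {p.2} := by
      ext ω; simp [Set.mem_preimage]
    rw [he]
    exact (hD (measurableSet_singleton _)).inter (hS (measurableSet_singleton _))
  set F := Finset.range (m + 1) ×ˢ Finset.range (Lp + 1) with hF
  have hdisj : (↑F : Set (ℕ × ℕ)).PairwiseDisjoint
      (fun p : ℕ × ℕ => {ω | D ω = p.1 ∧ S ω = p.2}) := by
    intro p _ r _ hpr
    refine Set.disjoint_left.mpr fun ω hp hr => hpr ?_
    exact Prod.ext (hp.1 ▸ hr.1 ▸ rfl) (hp.2 ▸ hr.2 ▸ rfl)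
  have hPA : ∀ p ∈ F, P {ω | D ω = p.1 ∧ S ω = p.2} = ENNReal.ofReal (pm p.1 p.2) := by
    intro p hp
    rw [Finset.mem_product, Finset.mem_range, Finset.mem_range] at hp
    exact hpmf p.1 (Nat.lt_succ_iff.mp hp.1) p.2 (Nat.lt_succ_iff.mp hp.2)
  have htot : ∑ p ∈ F, pm p.1 p.2 = 1 := by
    rw [hF, Finset.sum_product, Finset.sum_comm]
    have hrow : ∀ ℓ ∈ Finset.range (Lp + 1),
        ∑ e ∈ Finset.range (m + 1), pm e ℓ
          = (Lp.choose ℓ : ℝ) * μ1 ^ ℓ * μ0 ^ (Lp - ℓ) := by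
      intro ℓ _
      set q := Γ1 ^ ℓ * Γ0 ^ (Lp - ℓ) with hq
      have : ∑ e ∈ Finset.range (m + 1), pm e ℓ
          = (Lp.choose ℓ : ℝ) * μ1 ^ ℓ * μ0 ^ (Lp - ℓ) *
            ∑ e ∈ Finset.range (m + 1), (m.choose e : ℝ) * q ^ e * (1 - q) ^ (m - e) := by
        rw [Finset.mul_sum]
        exact Finset.sum_congr rfl fun e _ => by rw [hpm]; ring
      rw [this, binom_sum]
      norm_num
    rw [Finset.sum_congr rfl hrow, binom_sum, show μ1 + μ0 = 1 by linarith, one_pow]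
  have hPtot : P (⋃ p ∈ F, {ω | D ω = p.1 ∧ S ω = p.2}) = 1 := by
    rw [measure_biUnion_finset hdisj (fun p _ => hA p), Finset.sum_congr rfl hPA,
      ← ENNReal.ofReal_sum_of_nonneg (fun p _ => hnn p.1 p.2), htot, ENNReal.ofReal_one]
  have hcompl : P ((⋃ p ∈ F, {ω | D ω = p.1 ∧ S ω = p.2})ᶜ) = 0 := by
    rw [measure_compl (Finset.measurableSet_biUnion F fun p _ => hA p) (measure_ne_top P _),
      hPtot, measure_univ, tsub_self]
  have hdisjℓ : (↑(Finset.range (Lp + 1)) : Set ℕ).PairwiseDisjoint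
      (fun ℓ : ℕ => {ω | D ω = d ∧ S ω = ℓ}) := by
    intro p _ r _ hpr
    exact Set.disjoint_left.mpr fun ω hp hr => hpr (hp.2 ▸ hr.2 ▸ rfl)
  have hPAd : ∀ ℓ ∈ Finset.range (Lp + 1),
      P {ω | D ω = d ∧ S ω = ℓ} = ENNReal.ofReal (pm d ℓ) := fun ℓ hℓ =>
    hpmf d hd ℓ (Nat.lt_succ_iff.mp (Finset.mem_range.mp hℓ))
  have hUeq : P (⋃ ℓ ∈ Finset.range (Lp + 1), {ω | D ω = d ∧ S ω = ℓ})
      = ENNReal.ofReal (∑ ℓ ∈ Finset.range (Lp + 1), pm d ℓ) := by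
    rw [measure_biUnion_finset hdisjℓ
        (fun ℓ _ => hA (d, ℓ)), Finset.sum_congr rfl hPAd,
      ← ENNReal.ofReal_sum_of_nonneg (fun ℓ _ => hnn d ℓ)]
  have hlow : ENNReal.ofReal (∑ ℓ ∈ Finset.range (Lp + 1), pm d ℓ) ≤ P {ω | D ω = d} := by
    rw [← hUeq]
    apply measure_mono
    intro ω hω
    simp only [Set.mem_iUnion] at hω
    obtain ⟨ℓ, _, h1, _⟩ := hω
    exact h1
  have hup : P {ω | D ω = d} ≤ ENNReal.ofReal (∑ ℓ ∈ Finset.range (Lp + 1), pm d ℓ) := by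
    have hsubU : {ω | D ω = d} ⊆
        (⋃ ℓ ∈ Finset.range (Lp + 1), {ω | D ω = d ∧ S ω = ℓ}) ∪
          (⋃ p ∈ F, {ω | D ω = p.1 ∧ S ω = p.2})ᶜ := by
      intro ω hω
      by_cases hmem : ω ∈ ⋃ p ∈ F, {ω | D ω = p.1 ∧ S ω = p.2}
      · left
        simp only [Set.mem_iUnion] at hmem ⊢
        obtain ⟨p, hpF, hDp, hSp⟩ := hmem
        rw [hF, Finset.mem_product] at hpF
        exact ⟨p.2, hpF.2, hω, hSp⟩
      · right; exact hmem
    calc P {ω | D ω = d}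
        ≤ P ((⋃ ℓ ∈ Finset.range (Lp + 1), {ω | D ω = d ∧ S ω = ℓ}) ∪
            (⋃ p ∈ F, {ω | D ω = p.1 ∧ S ω = p.2})ᶜ) := measure_mono hsubU
      _ ≤ P (⋃ ℓ ∈ Finset.range (Lp + 1), {ω | D ω = d ∧ S ω = ℓ}) +
            P ((⋃ p ∈ F, {ω | D ω = p.1 ∧ S ω = p.2})ᶜ) := measure_union_le _ _
      _ = ENNReal.ofReal (∑ ℓ ∈ Finset.range (Lp + 1), pm d ℓ) := by
            rw [hcompl, add_zero, hUeq]
  exact le_antisymm hup hlow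

/-- the degree rvs admit only trivial limits: `D_n ⇒ 0` if
`1 + ρ ln(Γ1^μ1 Γ0^μ0) < 0`, and `D_n ⇒ ∞` if `1 + ρ ln(Γ1^μ1 Γ0^μ0) > 0`. -/
theorem stmt4 {Ω : Type*} [MeasurableSpace Ω] (P : Measure Ω) [IsProbabilityMeasure P]
    (μ0 μ1 Γ0 Γ1 : ℝ) (hμ0 : μ0 ∈ Set.Ioo (0:ℝ) 1) (hμ1 : μ1 ∈ Set.Ioo (0:ℝ) 1)
    (hμ : μ0 + μ1 = 1) (hΓ0 : Γ0 ∈ Set.Ioo (0:ℝ) 1) (hΓ1 : Γ1 ∈ Set.Ioo (0:ℝ) 1)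
    (ρ : ℝ) (hρ : 0 < ρ) (L : ℕ → ℕ) (hL : IsAdmissible ρ L)
    (D S : ℕ → Ω → ℕ)
    (hDS : ∀ n, 2 ≤ n → IsCompoundBinomialPair P μ1 μ0 Γ1 Γ0 n (L n) (D n) (S n)) :
    (1 + ρ * Real.log (Γ1 ^ μ1 * Γ0 ^ μ0) < 0 →
      Tendsto (fun n => P {ω | D n ω = 0}) atTop (nhds (1 : ℝ≥0∞))) ∧
    (0 < 1 + ρ * Real.log (Γ1 ^ μ1 * Γ0 ^ μ0) →
      ∀ d : ℕ, Tendsto (fun n => P {ω | D n ω = d}) atTop (nhds (0 : ℝ≥0∞))) := by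
  obtain ⟨hLpos, hLlim⟩ := hL
  have hμ1p : 0 < μ1 := hμ1.1
  have hμ0p : 0 < μ0 := hμ0.1
  have hΓ1p : 0 < Γ1 := hΓ1.1
  have hΓ0p : 0 < Γ0 := hΓ0.1
  have hGM : Real.log (Γ1 ^ μ1 * Γ0 ^ μ0) = μ1 * Real.log Γ1 + μ0 * Real.log Γ0 := by
    rw [Real.log_mul (Real.rpow_pos_of_pos hΓ1p μ1).ne' (Real.rpow_pos_of_pos hΓ0p μ0).ne',
      Real.log_rpow hΓ1p, Real.log_rpow hΓ0p]
  have key : ∀ n : ℕ, 2 ≤ n → ∀ d : ℕ, d ≤ n - 1 →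
      P {ω | D n ω = d} = ENNReal.ofReal (∑ ℓ ∈ Finset.range (L n + 1),
        (((L n).choose ℓ : ℝ) * μ1 ^ ℓ * μ0 ^ (L n - ℓ) *
          ((n - 1).choose d : ℝ) * (Γ1 ^ ℓ * Γ0 ^ (L n - ℓ)) ^ d *
          (1 - Γ1 ^ ℓ * Γ0 ^ (L n - ℓ)) ^ (n - 1 - d))) :=
    fun n hn d hd => pmf_eval P hμ1p hμ0p hμ hΓ1 hΓ0 (L n) (hDS n hn) hd
  have hq0 : ∀ Lp ℓ : ℕ, 0 < Γ1 ^ ℓ * Γ0 ^ (Lp - ℓ) :=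
    fun Lp ℓ => mul_pos (pow_pos hΓ1p _) (pow_pos hΓ0p _)
  have hq1 : ∀ Lp ℓ : ℕ, Γ1 ^ ℓ * Γ0 ^ (Lp - ℓ) ≤ 1 := fun Lp ℓ =>
    mul_le_one₀ (pow_le_one₀ hΓ1p.le hΓ1.2.le) (pow_nonneg hΓ0p.le _)
      (pow_le_one₀ hΓ0p.le hΓ0.2.le)
  have hb1 : ∀ Lp : ℕ, ∑ ℓ ∈ Finset.range (Lp + 1),
      (Lp.choose ℓ : ℝ) * μ1 ^ ℓ * μ0 ^ (Lp - ℓ) = 1 := fun Lp => by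
    rw [binom_sum, show μ1 + μ0 = 1 by linarith, one_pow]
  have hbnn : ∀ Lp ℓ : ℕ, 0 ≤ (Lp.choose ℓ : ℝ) * μ1 ^ ℓ * μ0 ^ (Lp - ℓ) := fun Lp ℓ => by
    positivity
  constructor
  · -- subcritical case
    intro hlt
    have hd1 : HasDerivAt (fun s : ℝ => Γ1 ^ s) (Real.log Γ1) 0 := by
      simpa using (Real.hasStrictDerivAt_const_rpow hΓ1p 0).hasDerivAt
    have hd0 : HasDerivAt (fun s : ℝ => Γ0 ^ s) (Real.log Γ0) 0 := by
      simpa using (Real.hasStrictDerivAt_const_rpow hΓ0p 0).hasDerivAt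
    have hu : HasDerivAt (fun s : ℝ => μ1 * Γ1 ^ s + μ0 * Γ0 ^ s)
        (μ1 * Real.log Γ1 + μ0 * Real.log Γ0) 0 :=
      (hd1.const_mul μ1).add (hd0.const_mul μ0)
    have hu0 : μ1 * Γ1 ^ (0:ℝ) + μ0 * Γ0 ^ (0:ℝ) = 1 := by
      rw [Real.rpow_zero, Real.rpow_zero]; linarith
    have hh : HasDerivAt (fun s : ℝ => s + ρ * Real.log (μ1 * Γ1 ^ s + μ0 * Γ0 ^ s))
        (1 + ρ * Real.log (Γ1 ^ μ1 * Γ0 ^ μ0)) 0 := by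
      have hlog := (hu.log (by rw [hu0]; norm_num)).const_mul ρ
      have hsum := (hasDerivAt_id (0:ℝ)).add hlog
      convert hsum using 1
      show 1 + ρ * Real.log (Γ1 ^ μ1 * Γ0 ^ μ0)
        = 1 + ρ * ((μ1 * Real.log Γ1 + μ0 * Real.log Γ0) / (μ1 * Γ1 ^ (0:ℝ) + μ0 * Γ0 ^ (0:ℝ)))
      rw [hu0, hGM, div_one]
      all_goals rfl
    have hzero : (fun s : ℝ => s + ρ * Real.log (μ1 * Γ1 ^ s + μ0 * Γ0 ^ s)) 0 = 0 := by
      show (0:ℝ) + ρ * Real.log (μ1 * Γ1 ^ (0:ℝ) + μ0 * Γ0 ^ (0:ℝ)) = 0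
      rw [hu0, Real.log_one]; ring
    obtain ⟨s, hs0, hs1, hsneg⟩ := deriv_neg_ex hh hzero hlt
    set G := μ1 * Γ1 ^ s + μ0 * Γ0 ^ s with hGdef
    have hGpos : 0 < G := by
      have h1 := Real.rpow_pos_of_pos hΓ1p s
      have h0 := Real.rpow_pos_of_pos hΓ0p s
      rw [hGdef]; positivity
    have hcond : s + ρ * Real.log G < 0 := hsneg
    have hlim0 : Tendsto (fun n : ℕ => (n:ℝ) ^ s * G ^ (L n)) atTop (nhds 0) :=
      key_lim ρ hρ L hLlim s G hGpos hcond
    have hlim1 : Tendsto (fun n : ℕ => ENNReal.ofReal (1 - (n:ℝ) ^ s * G ^ (L n)))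
        atTop (nhds 1) := by
      have h1 : Tendsto (fun n : ℕ => 1 - (n:ℝ) ^ s * G ^ (L n)) atTop (nhds 1) := by
        simpa using tendsto_const_nhds.sub hlim0
      have h2 := (ENNReal.continuous_ofReal.tendsto 1).comp h1
      simpa [ENNReal.ofReal_one, Function.comp_def] using h2
    refine tendsto_of_tendsto_of_tendsto_of_le_of_le' hlim1 tendsto_const_nhds ?_
      (Eventually.of_forall fun n => prob_le_one)
    filter_upwards [eventually_ge_atTop 2] with n hn
    rw [key n hn 0 (Nat.zero_le _)]
    apply ENNReal.ofReal_le_ofReal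
    set Lp := L n with hLpdef
    set m := n - 1 with hmdef
    have hms : ((m:ℝ)) ^ s ≤ (n:ℝ) ^ s :=
      Real.rpow_le_rpow (Nat.cast_nonneg m) (by exact_mod_cast Nat.sub_le n 1) hs0.le
    have hsum2 : ∑ ℓ ∈ Finset.range (Lp + 1),
        (Lp.choose ℓ : ℝ) * μ1 ^ ℓ * μ0 ^ (Lp - ℓ) * ((Γ1 ^ s) ^ ℓ * (Γ0 ^ s) ^ (Lp - ℓ))
          = G ^ Lp := by
      rw [hGdef, ← binom_sum (μ1 * Γ1 ^ s) (μ0 * Γ0 ^ s) Lp]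
      exact Finset.sum_congr rfl fun ℓ _ => by ring
    have hterm : ∀ ℓ ∈ Finset.range (Lp + 1),
        (Lp.choose ℓ : ℝ) * μ1 ^ ℓ * μ0 ^ (Lp - ℓ)
          - (m:ℝ) ^ s * ((Lp.choose ℓ : ℝ) * μ1 ^ ℓ * μ0 ^ (Lp - ℓ) *
              ((Γ1 ^ s) ^ ℓ * (Γ0 ^ s) ^ (Lp - ℓ)))
        ≤ (Lp.choose ℓ : ℝ) * μ1 ^ ℓ * μ0 ^ (Lp - ℓ) * (m.choose 0 : ℝ) *
            (Γ1 ^ ℓ * Γ0 ^ (Lp - ℓ)) ^ 0 * (1 - Γ1 ^ ℓ * Γ0 ^ (Lp - ℓ)) ^ (m - 0) := by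
      intro ℓ _
      have hq0' : 0 < Γ1 ^ ℓ * Γ0 ^ (Lp - ℓ) := hq0 Lp ℓ
      have hq1' : Γ1 ^ ℓ * Γ0 ^ (Lp - ℓ) ≤ 1 := hq1 Lp ℓ
      set q := Γ1 ^ ℓ * Γ0 ^ (Lp - ℓ) with hqdef
      have hbern : 1 - (m:ℝ) * q ≤ (1 - q) ^ m := by
        have hb := one_add_mul_le_pow (show (-2:ℝ) ≤ -q by linarith) m
        rw [show (1:ℝ) + -q = 1 - q by ring] at hb
        calc 1 - (m:ℝ) * q = 1 + (m:ℝ) * (-q) := by ring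
          _ ≤ (1 - q) ^ m := hb
      have hmin : 1 - (1 - q) ^ m ≤ ((m:ℝ) * q) ^ s := by
        have hpn : (0:ℝ) ≤ (1 - q) ^ m := pow_nonneg (by linarith) m
        have h1 : 1 - (1 - q) ^ m ≤ min 1 ((m:ℝ) * q) := le_min (by linarith) (by linarith)
        exact h1.trans (min1_le_rpow (by positivity) hs0 hs1)
      have hmq : ((m:ℝ) * q) ^ s = (m:ℝ) ^ s * ((Γ1 ^ s) ^ ℓ * (Γ0 ^ s) ^ (Lp - ℓ)) := by
        rw [Real.mul_rpow (Nat.cast_nonneg m) hq0'.le, hqdef,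
          q_pow_rpow hΓ1p hΓ0p s Lp ℓ]
      have hfin : 1 - (m:ℝ) ^ s * ((Γ1 ^ s) ^ ℓ * (Γ0 ^ s) ^ (Lp - ℓ)) ≤ (1 - q) ^ m := by
        rw [← hmq]; linarith
      calc (Lp.choose ℓ : ℝ) * μ1 ^ ℓ * μ0 ^ (Lp - ℓ)
            - (m:ℝ) ^ s * ((Lp.choose ℓ : ℝ) * μ1 ^ ℓ * μ0 ^ (Lp - ℓ) *
                ((Γ1 ^ s) ^ ℓ * (Γ0 ^ s) ^ (Lp - ℓ)))
          = (Lp.choose ℓ : ℝ) * μ1 ^ ℓ * μ0 ^ (Lp - ℓ) *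
              (1 - (m:ℝ) ^ s * ((Γ1 ^ s) ^ ℓ * (Γ0 ^ s) ^ (Lp - ℓ))) := by ring
        _ ≤ (Lp.choose ℓ : ℝ) * μ1 ^ ℓ * μ0 ^ (Lp - ℓ) * (1 - q) ^ m :=
            mul_le_mul_of_nonneg_left hfin (hbnn Lp ℓ)
        _ = (Lp.choose ℓ : ℝ) * μ1 ^ ℓ * μ0 ^ (Lp - ℓ) * (m.choose 0 : ℝ) *
              q ^ 0 * (1 - q) ^ (m - 0) := by
            rw [Nat.choose_zero_right, pow_zero, Nat.sub_zero]; push_cast; ring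
    calc 1 - (n:ℝ) ^ s * G ^ Lp
        ≤ 1 - (m:ℝ) ^ s * G ^ Lp := by
          have hGL : (0:ℝ) ≤ G ^ Lp := (pow_pos hGpos Lp).le
          nlinarith
      _ = ∑ ℓ ∈ Finset.range (Lp + 1),
            ((Lp.choose ℓ : ℝ) * μ1 ^ ℓ * μ0 ^ (Lp - ℓ)
              - (m:ℝ) ^ s * ((Lp.choose ℓ : ℝ) * μ1 ^ ℓ * μ0 ^ (Lp - ℓ) *
                  ((Γ1 ^ s) ^ ℓ * (Γ0 ^ s) ^ (Lp - ℓ)))) := by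
          rw [Finset.sum_sub_distrib, hb1 Lp, ← Finset.mul_sum, hsum2]
      _ ≤ _ := Finset.sum_le_sum hterm
  · -- supercritical case
    intro hgt d
    have hGMpos : 0 < Γ1 ^ μ1 * Γ0 ^ μ0 :=
      mul_pos (Real.rpow_pos_of_pos hΓ1p μ1) (Real.rpow_pos_of_pos hΓ0p μ0)
    have hGMlt1 : Γ1 ^ μ1 * Γ0 ^ μ0 < 1 := by
      have h1 : Γ1 ^ μ1 < 1 := Real.rpow_lt_one hΓ1p.le hΓ1.2 hμ1p
      have h2 : Γ0 ^ μ0 ≤ 1 := (Real.rpow_lt_one hΓ0p.le hΓ0.2 hμ0p).le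
      nlinarith [Real.rpow_pos_of_pos hΓ0p μ0]
    have hlogneg : Real.log (Γ1 ^ μ1 * Γ0 ^ μ0) < 0 := Real.log_neg hGMpos hGMlt1
    set τ := -(ρ * Real.log (Γ1 ^ μ1 * Γ0 ^ μ0)) with hτdef
    have hτ0 : 0 < τ := by rw [hτdef]; nlinarith
    have hτ1 : τ < 1 := by rw [hτdef]; linarith
    set θ := (τ + 1) / 2 with hθdef
    have hθτ : τ < θ := by rw [hθdef]; linarith
    have hθ1 : θ < 1 := by rw [hθdef]; linarith
    have hθ0 : 0 < θ := by rw [hθdef]; linarith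
    have hΓ1ip : 0 < Γ1⁻¹ := by positivity
    have hΓ0ip : 0 < Γ0⁻¹ := by positivity
    have hd1 : HasDerivAt (fun s : ℝ => (Γ1⁻¹) ^ s) (Real.log Γ1⁻¹) 0 := by
      simpa using (Real.hasStrictDerivAt_const_rpow hΓ1ip 0).hasDerivAt
    have hd0 : HasDerivAt (fun s : ℝ => (Γ0⁻¹) ^ s) (Real.log Γ0⁻¹) 0 := by
      simpa using (Real.hasStrictDerivAt_const_rpow hΓ0ip 0).hasDerivAt
    have hu : HasDerivAt (fun s : ℝ => μ1 * (Γ1⁻¹) ^ s + μ0 * (Γ0⁻¹) ^ s)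
        (μ1 * Real.log Γ1⁻¹ + μ0 * Real.log Γ0⁻¹) 0 :=
      (hd1.const_mul μ1).add (hd0.const_mul μ0)
    have hu0 : μ1 * (Γ1⁻¹) ^ (0:ℝ) + μ0 * (Γ0⁻¹) ^ (0:ℝ) = 1 := by
      rw [Real.rpow_zero, Real.rpow_zero]; linarith
    have hkderiv : HasDerivAt
        (fun s : ℝ => ρ * Real.log (μ1 * (Γ1⁻¹) ^ s + μ0 * (Γ0⁻¹) ^ s) - θ * s) (τ - θ) 0 := by
      have hlog := (hu.log (by rw [hu0]; norm_num)).const_mul ρ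
      have hlin : HasDerivAt (fun s : ℝ => θ * s) θ 0 := by
        simpa using (hasDerivAt_id (0:ℝ)).const_mul θ
      have hsub := hlog.sub hlin
      convert hsub using 1
      show τ - θ = ρ * ((μ1 * Real.log Γ1⁻¹ + μ0 * Real.log Γ0⁻¹)
        / (μ1 * (Γ1⁻¹) ^ (0:ℝ) + μ0 * (Γ0⁻¹) ^ (0:ℝ))) - θ
      rw [hu0, div_one, hτdef, hGM, Real.log_inv, Real.log_inv]
      ring
      all_goals rfl
    have hkzero : (fun s : ℝ => ρ * Real.log (μ1 * (Γ1⁻¹) ^ s + μ0 * (Γ0⁻¹) ^ s) - θ * s) 0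
        = 0 := by
      show ρ * Real.log (μ1 * (Γ1⁻¹) ^ (0:ℝ) + μ0 * (Γ0⁻¹) ^ (0:ℝ)) - θ * 0 = 0
      rw [hu0, Real.log_one]; ring
    obtain ⟨s, hs0, hs1, hksneg⟩ := deriv_neg_ex hkderiv hkzero (by linarith : τ - θ < 0)
    set G2 := μ1 * (Γ1⁻¹) ^ s + μ0 * (Γ0⁻¹) ^ s with hG2def
    have hG2pos : 0 < G2 := by
      have h1 := Real.rpow_pos_of_pos hΓ1ip s
      have h0 := Real.rpow_pos_of_pos hΓ0ip s
      rw [hG2def]; positivity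
    have hcond : -(θ * s) + ρ * Real.log G2 < 0 := by
      have h : ρ * Real.log G2 - θ * s < 0 := hksneg
      linarith
    have lim1 : Tendsto (fun n : ℕ => (n:ℝ) ^ (-(θ * s)) * G2 ^ (L n)) atTop (nhds 0) :=
      key_lim ρ hρ L hLlim _ G2 hG2pos hcond
    set c : ℕ → ℝ := fun n => ((n - 1 : ℕ) : ℝ) * (n:ℝ) ^ (-θ) with hcdef
    have hc : Tendsto c atTop atTop := by
      have hlow : Tendsto (fun n : ℕ => (n:ℝ) ^ (1 - θ) / 2) atTop atTop :=
        ((tendsto_rpow_atTop (by linarith)).comp tendsto_natCast_atTop_atTop).atTop_div_const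
          two_pos
      refine tendsto_atTop_mono' atTop ?_ hlow
      filter_upwards [eventually_ge_atTop 2] with n hn
      have hn0 : (0:ℝ) < n := by positivity
      have hcast : ((n - 1 : ℕ) : ℝ) = (n:ℝ) - 1 := by
        rw [Nat.cast_sub (by omega)]; norm_num
      have h2 : (n:ℝ) / 2 ≤ (n:ℝ) - 1 := by
        have : (2:ℝ) ≤ n := by exact_mod_cast hn
        linarith
      have hsplit : (n:ℝ) ^ (1 - θ) = (n:ℝ) * (n:ℝ) ^ (-θ) := by
        rw [show (1:ℝ) - θ = 1 + (-θ) by ring, Real.rpow_add hn0, Real.rpow_one]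
      show (n:ℝ) ^ (1 - θ) / 2 ≤ c n
      rw [hcdef]
      simp only []
      rw [hcast, hsplit]
      have hrp : (0:ℝ) ≤ (n:ℝ) ^ (-θ) := (Real.rpow_pos_of_pos hn0 _).le
      calc (n:ℝ) * (n:ℝ) ^ (-θ) / 2 = ((n:ℝ) / 2) * (n:ℝ) ^ (-θ) := by ring
        _ ≤ ((n:ℝ) - 1) * (n:ℝ) ^ (-θ) := mul_le_mul_of_nonneg_right h2 hrp
    have hψ : Tendsto (fun x : ℝ => x ^ d * Real.exp (-x / 2)) atTop (nhds 0) := by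
      have base := tendsto_pow_mul_exp_neg_atTop_nhds_zero d
      have half : Tendsto (fun x : ℝ => x / 2) atTop atTop :=
        tendsto_id.atTop_div_const two_pos
      have comp := (base.comp half).const_mul ((2:ℝ) ^ d)
      simp only [mul_zero] at comp
      refine comp.congr fun x => ?_
      show (2:ℝ) ^ d * ((x / 2) ^ d * Real.exp (-(x / 2))) = x ^ d * Real.exp (-x / 2)
      rw [div_pow, neg_div]
      field_simp
    have lim2 : Tendsto (fun n : ℕ => (c n) ^ d * Real.exp (-(c n) / 2)) atTop (nhds 0) :=
      hψ.comp hc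
    have limsum : Tendsto (fun n : ℕ => (n:ℝ) ^ (-(θ * s)) * G2 ^ (L n)
        + (c n) ^ d * Real.exp (-(c n) / 2)) atTop (nhds 0) := by
      simpa using lim1.add lim2
    have limup : Tendsto (fun n : ℕ => ENNReal.ofReal ((n:ℝ) ^ (-(θ * s)) * G2 ^ (L n)
        + (c n) ^ d * Real.exp (-(c n) / 2))) atTop (nhds 0) := by
      have h2 := (ENNReal.continuous_ofReal.tendsto 0).comp limsum
      simpa [Function.comp_def] using h2
    refine tendsto_of_tendsto_of_tendsto_of_le_of_le' tendsto_const_nhds limup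
      (Eventually.of_forall fun n => zero_le) ?_
    filter_upwards [eventually_ge_atTop (2 * d + 2), hc.eventually_ge_atTop (2 * (d:ℝ))]
      with n hn hcn
    have hn2 : 2 ≤ n := by omega
    have hdm : d ≤ n - 1 := by omega
    rw [key n hn2 d hdm]
    apply ENNReal.ofReal_le_ofReal
    set Lp := L n with hLpdef
    set m := n - 1 with hmdef
    set t := (n:ℝ) ^ (-θ) with htdef
    have hn0 : (0:ℝ) < n := by positivity
    have ht0 : 0 < t := by rw [htdef]; positivity
    have h2dm : 2 * d ≤ m := by omega
    have hdm' : d ≤ m := by omega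
    have hcnt : c n = (m:ℝ) * t := rfl
    have hY0 : 0 ≤ (c n) ^ d * Real.exp (-(c n) / 2) := by
      have : (0:ℝ) ≤ c n := by
        rw [hcnt]; positivity
      positivity
    have hterm : ∀ ℓ ∈ Finset.range (Lp + 1),
        (Lp.choose ℓ : ℝ) * μ1 ^ ℓ * μ0 ^ (Lp - ℓ) * (m.choose d : ℝ) *
            (Γ1 ^ ℓ * Γ0 ^ (Lp - ℓ)) ^ d * (1 - Γ1 ^ ℓ * Γ0 ^ (Lp - ℓ)) ^ (m - d)
          ≤ (Lp.choose ℓ : ℝ) * μ1 ^ ℓ * μ0 ^ (Lp - ℓ) *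
            (t ^ s * (((Γ1⁻¹) ^ s) ^ ℓ * ((Γ0⁻¹) ^ s) ^ (Lp - ℓ))
              + (c n) ^ d * Real.exp (-(c n) / 2)) := by
      intro ℓ _
      have hq0' : 0 < Γ1 ^ ℓ * Γ0 ^ (Lp - ℓ) := hq0 Lp ℓ
      have hq1' : Γ1 ^ ℓ * Γ0 ^ (Lp - ℓ) ≤ 1 := hq1 Lp ℓ
      set q := Γ1 ^ ℓ * Γ0 ^ (Lp - ℓ) with hqdef
      have hX : (q⁻¹) ^ s = ((Γ1⁻¹) ^ s) ^ ℓ * ((Γ0⁻¹) ^ s) ^ (Lp - ℓ) := by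
        rw [hqdef, mul_inv, ← inv_pow, ← inv_pow, q_pow_rpow hΓ1ip hΓ0ip s Lp ℓ]
      have hinner : (m.choose d : ℝ) * q ^ d * (1 - q) ^ (m - d)
          ≤ t ^ s * (q⁻¹) ^ s + (c n) ^ d * Real.exp (-(c n) / 2) := by
        rcases lt_or_ge q t with hqt | htq
        · have h1 : (m.choose d : ℝ) * q ^ d * (1 - q) ^ (m - d) ≤ 1 :=
            term_le_one hdm' hq0'.le hq1'
          have h2 : (1:ℝ) ≤ t ^ s * (q⁻¹) ^ s := by
            rw [← Real.mul_rpow ht0.le (inv_nonneg.mpr hq0'.le)]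
            refine Real.one_le_rpow ?_ hs0.le
            rw [← div_eq_mul_inv]
            rw [le_div_iff₀ hq0']
            linarith
          linarith
        · have h1 : (m.choose d : ℝ) * q ^ d * (1 - q) ^ (m - d)
              ≤ ((m:ℝ) * q) ^ d * Real.exp (-((m:ℝ) * q) / 2) :=
            binom_term_le_psi h2dm hq0'.le hq1'
          have hcn' : 2 * (d:ℝ) ≤ c n := hcn
          have h2 : ((m:ℝ) * q) ^ d * Real.exp (-((m:ℝ) * q) / 2)
              ≤ (c n) ^ d * Real.exp (-(c n) / 2) := by
            rw [hcnt]
            exact psi_anti d (hcnt ▸ hcn') (mul_le_mul_of_nonneg_left htq (Nat.cast_nonneg m))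
          have h3 : (0:ℝ) ≤ t ^ s * (q⁻¹) ^ s := by positivity
          linarith
      calc (Lp.choose ℓ : ℝ) * μ1 ^ ℓ * μ0 ^ (Lp - ℓ) * (m.choose d : ℝ) * q ^ d *
            (1 - q) ^ (m - d)
          = (Lp.choose ℓ : ℝ) * μ1 ^ ℓ * μ0 ^ (Lp - ℓ) *
              ((m.choose d : ℝ) * q ^ d * (1 - q) ^ (m - d)) := by ring
        _ ≤ (Lp.choose ℓ : ℝ) * μ1 ^ ℓ * μ0 ^ (Lp - ℓ) *
              (t ^ s * (q⁻¹) ^ s + (c n) ^ d * Real.exp (-(c n) / 2)) :=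
            mul_le_mul_of_nonneg_left hinner (hbnn Lp ℓ)
        _ = _ := by rw [hX]
    have hsum2 : ∑ ℓ ∈ Finset.range (Lp + 1),
        ((Lp.choose ℓ : ℝ) * μ1 ^ ℓ * μ0 ^ (Lp - ℓ) *
          (t ^ s * (((Γ1⁻¹) ^ s) ^ ℓ * ((Γ0⁻¹) ^ s) ^ (Lp - ℓ))
            + (c n) ^ d * Real.exp (-(c n) / 2)))
        = t ^ s * G2 ^ Lp + (c n) ^ d * Real.exp (-(c n) / 2) := by
      have hre : ∀ ℓ ∈ Finset.range (Lp + 1),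
          (Lp.choose ℓ : ℝ) * μ1 ^ ℓ * μ0 ^ (Lp - ℓ) *
            (t ^ s * (((Γ1⁻¹) ^ s) ^ ℓ * ((Γ0⁻¹) ^ s) ^ (Lp - ℓ))
              + (c n) ^ d * Real.exp (-(c n) / 2))
          = t ^ s * ((Lp.choose ℓ : ℝ) * (μ1 * (Γ1⁻¹) ^ s) ^ ℓ * (μ0 * (Γ0⁻¹) ^ s) ^ (Lp - ℓ))
            + ((Lp.choose ℓ : ℝ) * μ1 ^ ℓ * μ0 ^ (Lp - ℓ)) *
                ((c n) ^ d * Real.exp (-(c n) / 2)) := by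
        intro ℓ _
        rw [mul_pow, mul_pow]
        ring
      rw [Finset.sum_congr rfl hre, Finset.sum_add_distrib, ← Finset.mul_sum,
        ← Finset.sum_mul, binom_sum, hb1 Lp, one_mul, hG2def]
    have hts : t ^ s = (n:ℝ) ^ (-(θ * s)) := by
      rw [htdef, ← Real.rpow_mul hn0.le, neg_mul]
    calc ∑ ℓ ∈ Finset.range (Lp + 1),
          ((Lp.choose ℓ : ℝ) * μ1 ^ ℓ * μ0 ^ (Lp - ℓ) * (m.choose d : ℝ) *
            (Γ1 ^ ℓ * Γ0 ^ (Lp - ℓ)) ^ d * (1 - Γ1 ^ ℓ * Γ0 ^ (Lp - ℓ)) ^ (m - d))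
        ≤ ∑ ℓ ∈ Finset.range (Lp + 1),
            ((Lp.choose ℓ : ℝ) * μ1 ^ ℓ * μ0 ^ (Lp - ℓ) *
              (t ^ s * (((Γ1⁻¹) ^ s) ^ ℓ * ((Γ0⁻¹) ^ s) ^ (Lp - ℓ))
                + (c n) ^ d * Real.exp (-(c n) / 2))) := Finset.sum_le_sum hterm
      _ = t ^ s * G2 ^ Lp + (c n) ^ d * Real.exp (-(c n) / 2) := hsum2
      _ = (n:ℝ) ^ (-(θ * s)) * G2 ^ Lp + (c n) ^ d * Real.exp (-(c n) / 2) := by rw [hts]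

end
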